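/- Let k be an algebraically closed field, f_1,...,f_m algebraically independent polynomials in k[t_1,...,t_n], and g ∈ k[t_1,...,t_n] a polynomial determined by (f_1,...,f_m). Let D := {(f_1(a),...,f_m(a),g(a)) : a ∈ k^n} ⊆ k^{m+1}. Then the Zariski-closure of D has dimension m. -/

import Mathlib

open MvPolynomial

/-- `p` vanishes at every point of `A`. -/
def VanishesOn {k : Type*} [CommSemiring k] {m : ℕ} (A : Set (Fin m → k))
    (p : MvPolynomial (Fin m) k) : Prop :=
  ∀ a ∈ A, eval a p = 0

/-- The Zariski closure of `A ⊆ k^m` has dimension at most `d` (with `dim ∅ = -1`):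
for every index set `S` with more than `d` elements, the vanishing ideal of `A`
contains a nonzero polynomial supported on the variables in `S`. -/
def ZClosureDimLE {k : Type*} [CommSemiring k] {m : ℕ} (A : Set (Fin m → k)) (d : ℤ) : Prop :=
  ∀ S : Finset (Fin m), d < (S.card : ℤ) →
    ∃ p : MvPolynomial (Fin m) k, p ≠ 0 ∧
      p ∈ MvPolynomial.supported k (↑S : Set (Fin m)) ∧ VanishesOn A p

/-- The range of the polynomial map `k^n → k^m` induced by `f`. -/
def polyRange {k : Type*} [CommSemiring k] {m n : ℕ}
    (f : Fin m → MvPolynomial (Fin n) k) : Set (Fin m → k) :=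
  Set.range fun a : Fin n → k => fun i => eval a (f i)

/-- `f` is almost surjective on `k`: the Zariski closure of the complement of the range
of the induced map `k^n → k^m` has dimension at most `m - 2`. -/
def AlmostSurj {k : Type*} [CommSemiring k] {m n : ℕ}
    (f : Fin m → MvPolynomial (Fin n) k) : Prop :=
  ZClosureDimLE (polyRange f)ᶜ ((m : ℤ) - 2)

/-- `g` is determined by `f`. -/
def Determined {k : Type*} [CommSemiring k] {m n : ℕ}
    (f : Fin m → MvPolynomial (Fin n) k) (g : MvPolynomial (Fin n) k) : Prop :=
  ∀ a b : Fin n → k, (∀ i, eval a (f i) = eval b (f i)) → eval a g = eval b g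

/-- Evaluation of a substituted polynomial. -/
private lemma eval_aeval_comm {k : Type*} [CommSemiring k] {ι σ : Type*}
    (a : σ → k) (u : ι → MvPolynomial σ k) (p : MvPolynomial ι k) :
    eval a (aeval u p) = eval (fun i => eval a (u i)) p := by
  induction p using MvPolynomial.induction_on with
  | C c => simp only [aeval_C, eval_C, algebraMap_eq]
  | add p q hp hq => simp only [map_add, hp, hq]
  | mul_X p i hp => simp only [map_mul, aeval_X, eval_X, hp]

/-- Given an algebraically independent family `y` over a field `F` inside an algebraically
closed field `Ω`, there is a ring endomorphism of `Ω` fixing `F` and all `y i` for `i ≠ i0`,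
and sending `y i0` to `y i0 + 1`. -/
private lemma exists_move_one {F Ω : Type*} [Field F] [Field Ω] [IsAlgClosed Ω] [Algebra F Ω]
    {ι : Type*} (y : ι → Ω) (hy : AlgebraicIndependent F y) (i0 : ι) :
    ∃ σ : Ω →+* Ω, (∀ c : F, σ (algebraMap F Ω c) = algebraMap F Ω c) ∧
      (∀ i, i ≠ i0 → σ (y i) = y i) ∧ σ (y i0) = y i0 + 1 := by
  classical
  obtain ⟨u, hyu, hmax⟩ := exists_maximal_algebraicIndependent (Set.range y) Set.univ
    (Set.subset_univ _) hy.coe_range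
  have hu : IsTranscendenceBasis F ((↑) : u → Ω) := by
    refine ⟨hmax.prop.1, fun s hs hus => ?_⟩
    simp only [Subtype.range_coe_subtype, Set.setOf_mem_eq] at *
    exact hmax.eq_of_le ⟨hs, Set.subset_univ _⟩ hus
  have hx : AlgebraicIndependent F ((↑) : u → Ω) := hu.1
  set x' : u → Ω := fun j => if (j : Ω) = y i0 then (j : Ω) + 1 else (j : Ω) with hx'def
  have hx' : AlgebraicIndependent F x' := by
    have htr : ∀ j : u, Transcendental F
        (if (j : Ω) = y i0 then Polynomial.X + Polynomial.C (1 : F) else Polynomial.X) := by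
      intro j
      by_cases h : (j : Ω) = y i0 <;> simp only [h, if_true, if_false]
      · have hdeg : (Polynomial.X + Polynomial.C (1 : F)).natDegree = 1 :=
          Polynomial.natDegree_X_add_C 1
        refine Polynomial.transcendental _ (by rw [hdeg]; norm_num) ?_
        rw [Polynomial.leadingCoeff_X_add_C]
        exact one_mem _
      · exact Polynomial.transcendental_X F
    have h2 := hx.polynomial_aeval_of_transcendental htr
    convert h2 using 1
    funext j
    by_cases h : (j : Ω) = y i0 <;> simp [hx'def, h]
  set Rs : Subalgebra F Ω := Algebra.adjoin F (Set.range ((↑) : u → Ω)) with hRs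
  let σ' : Rs →ₐ[F] Ω := (aeval x').comp hx.repr
  have hσ'A : ∀ p : MvPolynomial u F, σ' (hx.aevalEquiv p) = aeval x' p := by
    intro p
    show aeval x' (hx.repr (hx.aevalEquiv p)) = aeval x' p
    congr 1
    exact hx.aevalEquiv.symm_apply_apply p
  have hmem : ∀ j : u, (j : Ω) ∈ Rs := fun j => Algebra.subset_adjoin (Set.mem_range_self j)
  have hσ'x : ∀ j : u, σ' ⟨(j : Ω), hmem j⟩ = x' j := by
    intro j
    have hxj : (⟨(j : Ω), hmem j⟩ : Rs) = hx.aevalEquiv (X j) := by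
      ext
      rw [hx.aevalEquiv_apply_coe, aeval_X]
    rw [hxj, hσ'A, aeval_X]
  have hσ'inj : Function.Injective σ' := by
    intro a b hab
    have h1 : Function.Injective (aeval x' : MvPolynomial u F →ₐ[F] Ω) :=
      algebraicIndependent_iff_injective_aeval.1 hx'
    have h2 : hx.repr a = hx.repr b := h1 hab
    exact hx.aevalEquiv.symm.injective h2
  haveI halg : Algebra.IsAlgebraic Rs Ω := hu.isAlgebraic
  haveI hnz1 : Module.IsTorsionFree Rs Ω :=
    Module.isTorsionFree_iff_algebraMap_injective.2 Subtype.val_injective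
  have hnz2 : @Module.IsTorsionFree Rs Ω _ _ (@Algebra.toModule _ _ _ _ σ'.toRingHom.toAlgebra) := by
    letI := σ'.toRingHom.toAlgebra
    exact Module.isTorsionFree_iff_algebraMap_injective.2 hσ'inj
  have σL := @IsAlgClosed.lift Ω _ _ Rs _ _ Ω _ _ _ σ'.toRingHom.toAlgebra hnz1 hnz2 halg
  obtain ⟨σR, hcomm⟩ : ∃ σR : Ω →+* Ω, ∀ r : Rs, σR (algebraMap Rs Ω r) = σ' r := by
    refine ⟨@AlgHom.toRingHom _ _ _ _ _ _ _ σ'.toRingHom.toAlgebra σL, fun r => ?_⟩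
    exact @AlgHom.commutes _ _ _ _ _ _ _ σ'.toRingHom.toAlgebra σL r
  have hσLx : ∀ j : u, σR ((j : Ω)) = x' j := by
    intro j
    have h0 := hcomm ⟨(j : Ω), hmem j⟩
    have h1 : algebraMap Rs Ω ⟨(j : Ω), hmem j⟩ = (j : Ω) := rfl
    rw [h1] at h0
    rw [h0]
    exact hσ'x j
  refine ⟨σR, ?_, ?_, ?_⟩
  · intro c
    have h1 : algebraMap F Ω c = algebraMap Rs Ω (algebraMap F Rs c) :=
      IsScalarTower.algebraMap_apply F Rs Ω c
    rw [h1, hcomm, σ'.commutes]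
    exact h1
  · intro i hi
    have hju : y i ∈ u := hyu (Set.mem_range_self i)
    have h2 := hσLx ⟨y i, hju⟩
    have hne : y i ≠ y i0 := hy.injective.ne hi
    show σR (y i) = y i
    rw [h2, hx'def]
    simp [hne]
  · have hju : y i0 ∈ u := hyu (Set.mem_range_self i0)
    have h2 := hσLx ⟨y i0, hju⟩
    show σR (y i0) = y i0 + 1
    rw [h2, hx'def]
    simp

/-- An auxiliary algebraically closed field extension. -/
private noncomputable abbrev Om (k : Type*) [Field k] (n : ℕ) :=
  AlgebraicClosure (FractionRing (MvPolynomial (Fin n) k))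

/-- If `g` is determined by `f` over an algebraically closed field, then the family
`f₁, …, fₘ, g` is algebraically dependent. -/
private lemma not_indep_of_determined {k : Type*} [Field k] [IsAlgClosed k] {m n : ℕ}
    (f : Fin m → MvPolynomial (Fin n) k) (g : MvPolynomial (Fin n) k) (hg : Determined f g)
    (hindep : AlgebraicIndependent k (Fin.snoc f g : Fin (m + 1) → MvPolynomial (Fin n) k)) :
    False := by
  classical
  let φ : MvPolynomial (Fin n) k →ₐ[k] Om k n :=
    IsScalarTower.toAlgHom k (MvPolynomial (Fin n) k) (Om k n)
  have hφinj : Function.Injective φ := by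
    show Function.Injective (algebraMap (MvPolynomial (Fin n) k) (Om k n))
    rw [IsScalarTower.algebraMap_eq (MvPolynomial (Fin n) k)
      (FractionRing (MvPolynomial (Fin n) k)) (Om k n)]
    exact (algebraMap (FractionRing (MvPolynomial (Fin n) k)) (Om k n)).injective.comp
      (IsFractionRing.injective _ _)
  have hy : AlgebraicIndependent k
      (⇑φ ∘ (Fin.snoc f g : Fin (m + 1) → MvPolynomial (Fin n) k)) := hindep.map' hφinj
  obtain ⟨σ, hσC, hσfix, hσmove⟩ := exists_move_one _ hy (Fin.last m)
  have hσf : ∀ i : Fin m, σ (φ (f i)) = φ (f i) := by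
    intro i
    have := hσfix (Fin.castSucc i) (Fin.castSucc_lt_last i).ne
    simpa [Fin.snoc_castSucc] using this
  have hσg : σ (φ g) = φ g + 1 := by
    simpa [Fin.snoc_last] using hσmove
  -- the Nullstellensatz step
  set Fi : Fin m → MvPolynomial (Fin n ⊕ Fin n) k :=
    fun i => rename Sum.inl (f i) - rename Sum.inr (f i) with hFi
  set G : MvPolynomial (Fin n ⊕ Fin n) k := rename Sum.inl g - rename Sum.inr g with hG
  have hGrad : G ∈ (Ideal.span (Set.range Fi)).radical := by
    rw [← vanishingIdeal_zeroLocus_eq_radical (K := k), mem_vanishingIdeal_iff]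
    intro x hx
    rw [mem_zeroLocus_iff] at hx
    have hxf : ∀ i, eval (x ∘ Sum.inl) (f i) = eval (x ∘ Sum.inr) (f i) := by
      intro i
      have := hx _ (Ideal.subset_span (Set.mem_range_self i))
      rw [hFi] at this
      simpa [eval_rename, sub_eq_zero] using this
    have heq := hg _ _ hxf
    rw [hG]
    simp [eval_rename, sub_eq_zero, heq]
  rw [Ideal.mem_radical_iff] at hGrad
  obtain ⟨N, hN⟩ := hGrad
  -- the contradiction via evaluation into Ω
  let τ : MvPolynomial (Fin n) k →ₐ[k] Om k n :=
    { toRingHom := σ.comp φ.toRingHom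
      commutes' := fun c => by
        show σ (φ (algebraMap k (MvPolynomial (Fin n) k) c)) = algebraMap k (Om k n) c
        rw [φ.commutes]
        exact hσC c }
  let v : (Fin n ⊕ Fin n) → Om k n := Sum.elim (fun j => φ (X j)) (fun j => σ (φ (X j)))
  let Ψ : MvPolynomial (Fin n ⊕ Fin n) k →+* Om k n := eval₂Hom (algebraMap k (Om k n)) v
  have hΨ1 : ∀ p : MvPolynomial (Fin n) k, Ψ (rename Sum.inl p) = φ p := by
    intro p
    show eval₂ (algebraMap k (Om k n)) v (rename Sum.inl p) = φ p
    rw [eval₂_rename]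
    conv_rhs => rw [aeval_unique φ]
    rfl
  have hΨ2 : ∀ p : MvPolynomial (Fin n) k, Ψ (rename Sum.inr p) = σ (φ p) := by
    intro p
    show eval₂ (algebraMap k (Om k n)) v (rename Sum.inr p) = σ (φ p)
    rw [eval₂_rename]
    show _ = τ p
    conv_rhs => rw [aeval_unique τ]
    rfl
  have hΨFi : ∀ i, Ψ (Fi i) = 0 := by
    intro i
    rw [hFi]
    simp only [map_sub, hΨ1, hΨ2, hσf, sub_self]
  have hΨG : Ψ G = -1 := by
    rw [hG]
    rw [map_sub, hΨ1, hΨ2, hσg]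
    ring
  have hker : Ideal.span (Set.range Fi) ≤ RingHom.ker Ψ := by
    rw [Ideal.span_le]
    rintro _ ⟨i, rfl⟩
    exact hΨFi i
  have hzero : Ψ (G ^ N) = 0 := hker hN
  rw [map_pow, hΨG] at hzero
  exact pow_ne_zero N (by norm_num : (-1 : Om k n) ≠ 0) hzero

theorem stmt10 {k : Type*} [Field k] [IsAlgClosed k] {m n : ℕ}
    (f : Fin m → MvPolynomial (Fin n) k) (hind : AlgebraicIndependent k f)
    (g : MvPolynomial (Fin n) k) (hg : Determined f g)
    (D : Set (Fin (m + 1) → k))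
    (hD : D = Set.range fun a : Fin n → k =>
      Fin.snoc (fun i => eval a (f i)) (eval a g)) :
    ZClosureDimLE D (m : ℤ) ∧ ¬ ZClosureDimLE D ((m : ℤ) - 1) := by
  classical
  have hsnoc : ∀ a : Fin n → k,
      (fun i => eval a ((Fin.snoc f g : Fin (m + 1) → MvPolynomial (Fin n) k) i)) =
        Fin.snoc (fun i => eval a (f i)) (eval a g) := by
    intro a
    funext i
    refine Fin.lastCases ?_ (fun j => ?_) i
    · simp [Fin.snoc_last]
    · simp [Fin.snoc_castSucc]
  constructor
  · -- dimension at most m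
    intro S hS
    have hnotind : ¬ AlgebraicIndependent k (Fin.snoc f g : Fin (m + 1) → MvPolynomial (Fin n) k) :=
      fun h => not_indep_of_determined f g hg h
    rw [algebraicIndependent_iff] at hnotind
    push_neg at hnotind
    obtain ⟨p, hp0, hpne⟩ := hnotind
    have hcard : S = Finset.univ := by
      apply Finset.eq_univ_of_card
      have h1 : S.card ≤ m + 1 := by simpa using S.card_le_univ
      have h2 : m < S.card := by exact_mod_cast hS
      simp only [Fintype.card_fin]
      omega
    refine ⟨p, hpne, ?_, ?_⟩
    · rw [hcard]
      rw [Finset.coe_univ, MvPolynomial.supported_univ]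
      exact Algebra.mem_top
    · intro x hx
      rw [hD] at hx
      obtain ⟨a, rfl⟩ := hx
      have hx0 : eval (Fin.snoc (fun i => eval a (f i)) (eval a g)) p = 0 := by
        rw [← hsnoc a, ← eval_aeval_comm, hp0]
        simp
      simpa using hx0
  · -- dimension not at most m - 1
    intro hcl
    set S : Finset (Fin (m + 1)) := Finset.univ.image Fin.castSucc with hSdef
    have hcard : S.card = m := by
      rw [hSdef, Finset.card_image_of_injective _ (Fin.castSucc_injective m),
        Finset.card_univ, Fintype.card_fin]
    obtain ⟨p, hp0, hpsup, hpv⟩ := hcl S (by rw [hcard]; linarith)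
    rw [supported_eq_range_rename] at hpsup
    obtain ⟨p', hp'0⟩ := hpsup
    have hp' : rename (Subtype.val : (↑S : Set (Fin (m + 1))) → Fin (m + 1)) p' = p := hp'0
    have hnotlast : ∀ j : (↑S : Set (Fin (m + 1))), (j : Fin (m + 1)) ≠ Fin.last m := by
      rintro ⟨j, hj⟩ h
      rw [Finset.mem_coe] at hj
      have hj' : j ∈ S := hj
      rw [hSdef, Finset.mem_image] at hj'
      obtain ⟨i, -, hi⟩ := hj'
      exact (Fin.castSucc_lt_last i).ne (hi.trans h)
    let h : (↑S : Set (Fin (m + 1))) → Fin m := fun j => (j : Fin (m + 1)).castPred (hnotlast j)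
    have hinj : Function.Injective h := by
      intro a b hab
      apply Subtype.ext
      have := congrArg Fin.castSucc hab
      rwa [Fin.castSucc_castPred, Fin.castSucc_castPred] at this
    have hq : aeval (Fin.snoc f g : Fin (m + 1) → MvPolynomial (Fin n) k) p = 0 := by
      apply MvPolynomial.funext
      intro a
      rw [eval_aeval_comm, hsnoc a]
      rw [map_zero]
      apply hpv
      rw [hD]
      exact ⟨a, rfl⟩
    rw [← hp', aeval_rename] at hq
    have hcomp : ((Fin.snoc f g : Fin (m + 1) → MvPolynomial (Fin n) k) ∘
        ((↑) : (↑S : Set (Fin (m + 1))) → Fin (m + 1))) = f ∘ h := by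
      funext j
      simp only [Function.comp_apply]
      conv_lhs => rw [← Fin.castSucc_castPred (j : Fin (m + 1)) (hnotlast j)]
      rw [Fin.snoc_castSucc]
    rw [hcomp] at hq
    have hindep2 : AlgebraicIndependent k (f ∘ h) := hind.comp h hinj
    have hp'0 : p' = 0 := (algebraicIndependent_iff.1 hindep2) p' hq
    rw [hp'0, map_zero] at hp'
    exact hp0 hp'.symm
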